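/- Let a > 0, α > 0, b > 0 and 0 ≤ r₀ < R be real numbers. Then ∫_{r₀}^{R} γ(a, b r^α) · r dr = ∑_{n=0}^{∞} (−1)^n b^{a+n} (R^{αa+αn+2} − r₀^{αa+αn+2}) / (n! (a+n)(αa+αn+2)), where the series converges absolutely. (This is the series expansion of the outage probability of Corollary 1; dividing by b^a and keeping the n = 0 term gives the high-SNR asymptotics.) -/

import Mathlib

open MeasureTheory intervalIntegral

/-- Lower incomplete gamma function `γ(a, x) = ∫₀ˣ t^(a-1) e^(-t) dt`. -/
noncomputable def lowerGamma (a x : ℝ) : ℝ := ∫ t in (0:ℝ)..x, t ^ (a - 1) * Real.exp (-t)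

/-- value of the rpow integral -/
lemma rpow_int_Ioc (p u v : ℝ) (hp : -1 < p) (huv : u ≤ v) :
    ∫ t in Set.Ioc u v, t ^ p = (v ^ (p+1) - u ^ (p+1)) / (p+1) := by
  rw [← intervalIntegral.integral_of_le huv]
  exact integral_rpow (Or.inl hp)

lemma gamma_series (a x : ℝ) (ha : 0 < a) (hx : 0 ≤ x) :
    lowerGamma a x = ∑' n : ℕ, (-1:ℝ) ^ n * x ^ (a + n) / (n.factorial * (a + n)) := by
  rcases hx.eq_or_lt with h | h
  · subst h
    have h0 : lowerGamma a 0 = 0 := intervalIntegral.integral_same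
    rw [h0]
    symm
    have : ∀ n : ℕ, (-1:ℝ) ^ n * (0:ℝ) ^ (a + n) / (n.factorial * (a + n)) = 0 := by
      intro n
      rw [Real.zero_rpow (by positivity)]
      ring
    simp only [this, tsum_zero]
  · -- x > 0
    set F : ℕ → ℝ → ℝ := fun n t => ((-1:ℝ) ^ n / n.factorial) * t ^ (a + n - 1) with hF
    have hp : ∀ n : ℕ, (-1:ℝ) < a + n - 1 := by
      intro n
      have : (0:ℝ) ≤ n := Nat.cast_nonneg n
      linarith
    have hInt : ∀ n : ℕ, IntegrableOn (F n) (Set.Ioc 0 x) volume := by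
      intro n
      exact (((intervalIntegral.intervalIntegrable_rpow' (hp n)).1)).const_mul _
    have hIval : ∀ n : ℕ, ∫ t in Set.Ioc 0 x, t ^ (a + n - 1) = x ^ (a + n) / (a + n) := by
      intro n
      rw [rpow_int_Ioc _ _ _ (hp n) h.le]
      rw [sub_add_cancel, Real.zero_rpow (by positivity), sub_zero]
    have hnorm : ∀ n : ℕ, ∫ t in Set.Ioc 0 x, ‖F n t‖ = (n.factorial : ℝ)⁻¹ * (x ^ (a + n) / (a + n)) := by
      intro n
      rw [← hIval n, ← MeasureTheory.integral_const_mul]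
      refine setIntegral_congr_fun measurableSet_Ioc fun t ht => ?_
      have ht0 : 0 < t := ht.1
      rw [hF]
      simp only [Real.norm_eq_abs, abs_mul, abs_div, abs_pow, abs_neg, abs_one, one_pow,
        Nat.abs_cast, abs_of_nonneg (Real.rpow_nonneg ht0.le _), one_div]
    have hsum : Summable fun n : ℕ => ∫ t in Set.Ioc 0 x, ‖F n t‖ := by
      simp only [hnorm]
      refine Summable.of_nonneg_of_le (fun n => by positivity) (fun n => ?_)
        ((Real.summable_pow_div_factorial x).mul_left (x ^ a / a))
      ·
        have hx1 : x ^ (a + (n:ℝ)) = x ^ a * x ^ n := by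
          rw [Real.rpow_add h, Real.rpow_natCast]
        rw [hx1]
        have han : a ≤ a + n := by
          have : (0:ℝ) ≤ n := Nat.cast_nonneg n
          linarith
        have h1 : x ^ a * x ^ n / (a + n) ≤ x ^ a * x ^ n / a :=
          div_le_div_of_nonneg_left (by positivity) ha han
        calc (n.factorial : ℝ)⁻¹ * (x ^ a * x ^ n / (a + n))
            ≤ (n.factorial : ℝ)⁻¹ * (x ^ a * x ^ n / a) := by
              exact mul_le_mul_of_nonneg_left h1 (by positivity)
          _ = x ^ a / a * (x ^ n / n.factorial) := by
              field_simp
    have key : ∀ t ∈ Set.Ioc 0 x, t ^ (a - 1) * Real.exp (-t) = ∑' n : ℕ, F n t := by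
      intro t ht
      have ht0 : 0 < t := ht.1
      rw [Real.exp_eq_exp_ℝ, NormedSpace.exp_eq_tsum_div, ← tsum_mul_left]
      refine tsum_congr fun n => ?_
      rw [hF]
      have h1 : (-t) ^ n = (-1:ℝ) ^ n * t ^ n := by rw [neg_pow]
      have h2 : t ^ (a - 1) * t ^ (n:ℕ) = t ^ (a + n - 1) := by
        rw [← Real.rpow_natCast t n, ← Real.rpow_add ht0]
        ring_nf
      calc t ^ (a - 1) * ((-t) ^ n / n.factorial)
          = ((-1:ℝ) ^ n / n.factorial) * (t ^ (a-1) * t ^ (n:ℕ)) := by rw [h1]; ring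
        _ = ((-1:ℝ) ^ n / n.factorial) * t ^ (a + n - 1) := by rw [h2]
    have step : lowerGamma a x = ∫ t in Set.Ioc 0 x, ∑' n : ℕ, F n t := by
      rw [lowerGamma, intervalIntegral.integral_of_le h.le]
      exact setIntegral_congr_fun measurableSet_Ioc key
    rw [step, ← MeasureTheory.integral_tsum_of_summable_integral_norm hInt hsum]
    refine tsum_congr fun n => ?_
    rw [MeasureTheory.integral_const_mul, hIval n]
    field_simp

theorem stmt_2 (a α b r₀ R : ℝ) (ha : 0 < a) (hα : 0 < α) (hb : 0 < b)
    (hr₀ : 0 ≤ r₀) (hR : r₀ < R) :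
    Summable (fun n : ℕ => |(-1 : ℝ) ^ n * b ^ (a + n) *
      (R ^ (α * a + α * n + 2) - r₀ ^ (α * a + α * n + 2)) /
      (n.factorial * (a + n) * (α * a + α * n + 2))|) ∧
    (∫ r in r₀..R, lowerGamma a (b * r ^ α) * r) =
      ∑' n : ℕ, (-1 : ℝ) ^ n * b ^ (a + n) *
        (R ^ (α * a + α * n + 2) - r₀ ^ (α * a + α * n + 2)) /
        (n.factorial * (a + n) * (α * a + α * n + 2)) := by
  have hR0 : 0 < R := lt_of_le_of_lt hr₀ hR
  have hcpos : ∀ n : ℕ, 0 < α * a + α * n + 2 := by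
    intro n
    have : (0:ℝ) ≤ n := Nat.cast_nonneg n
    nlinarith
  have hapos : ∀ n : ℕ, 0 < a + (n:ℝ) := by
    intro n
    have : (0:ℝ) ≤ n := Nat.cast_nonneg n
    linarith
  have hDnn : ∀ n : ℕ, 0 ≤ R ^ (α * a + α * n + 2) - r₀ ^ (α * a + α * n + 2) := by
    intro n
    have := Real.rpow_le_rpow hr₀ hR.le (hcpos n).le
    linarith
  -- |term n| in explicit nonnegative form
  have habs : ∀ n : ℕ, |(-1 : ℝ) ^ n * b ^ (a + n) *
      (R ^ (α * a + α * n + 2) - r₀ ^ (α * a + α * n + 2)) /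
      (n.factorial * (a + n) * (α * a + α * n + 2))| =
      b ^ (a + n) * (R ^ (α * a + α * n + 2) - r₀ ^ (α * a + α * n + 2)) /
      (n.factorial * (a + n) * (α * a + α * n + 2)) := by
    intro n
    have hfac : (0:ℝ) < n.factorial := by positivity
    rw [abs_div, abs_mul, abs_mul, abs_pow, abs_neg, abs_one, one_pow, one_mul,
      abs_of_nonneg (Real.rpow_nonneg hb.le _), abs_of_nonneg (hDnn n),
      abs_of_pos (by positivity : (0:ℝ) < n.factorial * (a + n) * (α * a + α * n + 2))]
  have hsummable : Summable (fun n : ℕ => |(-1 : ℝ) ^ n * b ^ (a + n) *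
      (R ^ (α * a + α * n + 2) - r₀ ^ (α * a + α * n + 2)) /
      (n.factorial * (a + n) * (α * a + α * n + 2))|) := by
    refine Summable.of_nonneg_of_le (fun n => abs_nonneg _) (fun n => ?_)
      ((Real.summable_pow_div_factorial (b * R ^ α)).mul_left
        (b ^ a * R ^ (α * a + 2) / (2 * a)))
    rw [habs n]
    have hb1 : b ^ (a + (n:ℝ)) = b ^ a * b ^ n := by
      rw [Real.rpow_add hb, Real.rpow_natCast]
    have hR1 : R ^ (α * a + α * n + 2) = R ^ (α * a + 2) * (R ^ α) ^ n := by
      rw [← Real.rpow_natCast (R ^ α) n, ← Real.rpow_mul hR0.le, ← Real.rpow_add hR0]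
      ring_nf
    have hnum : b ^ (a + (n:ℝ)) * (R ^ (α * a + α * n + 2) - r₀ ^ (α * a + α * n + 2)) ≤
        b ^ a * b ^ n * (R ^ (α * a + 2) * (R ^ α) ^ n) := by
      rw [hb1]
      have h1 : R ^ (α * a + α * n + 2) - r₀ ^ (α * a + α * n + 2) ≤
          R ^ (α * a + 2) * (R ^ α) ^ n := by
        rw [← hR1]
        have : 0 ≤ r₀ ^ (α * a + α * n + 2) := Real.rpow_nonneg hr₀ _
        linarith
      exact mul_le_mul_of_nonneg_left h1 (by positivity)
    have hden : (n.factorial : ℝ) * a * 2 ≤ n.factorial * (a + n) * (α * a + α * n + 2) := by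
      have hf : (1:ℝ) ≤ n.factorial := by exact_mod_cast Nat.one_le_iff_ne_zero.mpr n.factorial_ne_zero
      have hn : (0:ℝ) ≤ n := Nat.cast_nonneg n
      have h2 : (2:ℝ) ≤ α * a + α * n + 2 := by nlinarith
      have h3 : a ≤ a + n := by linarith
      calc (n.factorial : ℝ) * a * 2 ≤ n.factorial * (a + n) * 2 := by nlinarith
        _ ≤ n.factorial * (a + n) * (α * a + α * n + 2) :=
            mul_le_mul_of_nonneg_left h2 (by positivity)
    calc b ^ (a + (n:ℝ)) * (R ^ (α * a + α * n + 2) - r₀ ^ (α * a + α * n + 2)) /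
          (n.factorial * (a + n) * (α * a + α * n + 2))
        ≤ b ^ a * b ^ n * (R ^ (α * a + 2) * (R ^ α) ^ n) / ((n.factorial : ℝ) * a * 2) :=
          div_le_div₀ (by positivity) hnum (by positivity) hden
      _ = b ^ a * R ^ (α * a + 2) / (2 * a) * ((b * R ^ α) ^ n / n.factorial) := by
          rw [mul_pow]; ring
  refine ⟨hsummable, ?_⟩
  -- the series of functions
  set g : ℕ → ℝ → ℝ := fun n r =>
    ((-1:ℝ) ^ n * b ^ (a + n) / (n.factorial * (a + n))) * r ^ (α * a + α * n + 1) with hg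
  have hppos : ∀ n : ℕ, (-1:ℝ) < α * a + α * n + 1 := by
    intro n
    have := hcpos n
    linarith
  have hInt : ∀ n : ℕ, IntegrableOn (g n) (Set.Ioc r₀ R) volume := fun n =>
    ((intervalIntegrable_rpow' (hppos n)).1).const_mul _
  have hIval : ∀ n : ℕ, ∫ r in Set.Ioc r₀ R, r ^ (α * a + α * n + 1) =
      (R ^ (α * a + α * n + 2) - r₀ ^ (α * a + α * n + 2)) / (α * a + α * n + 2) := by
    intro n
    rw [rpow_int_Ioc _ _ _ (hppos n) hR.le]
    ring_nf
  have hnorm : ∀ n : ℕ, ∫ r in Set.Ioc r₀ R, ‖g n r‖ =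
      (b ^ (a + n) / (n.factorial * (a + n))) *
        ((R ^ (α * a + α * n + 2) - r₀ ^ (α * a + α * n + 2)) / (α * a + α * n + 2)) := by
    intro n
    rw [← hIval n, ← MeasureTheory.integral_const_mul]
    refine setIntegral_congr_fun measurableSet_Ioc fun r hr => ?_
    have hr0 : 0 < r := lt_of_le_of_lt hr₀ hr.1
    rw [hg]
    simp only [Real.norm_eq_abs, abs_mul, abs_div, abs_pow, abs_neg, abs_one, one_pow, one_mul,
      abs_of_nonneg (Real.rpow_nonneg hr0.le _), abs_of_nonneg (Real.rpow_nonneg hb.le _),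
      abs_of_pos (by positivity : (0:ℝ) < (n.factorial : ℝ) * (a + n))]
  have hsum : Summable fun n : ℕ => ∫ r in Set.Ioc r₀ R, ‖g n r‖ := by
    have : (fun n : ℕ => ∫ r in Set.Ioc r₀ R, ‖g n r‖) = fun n : ℕ =>
        |(-1 : ℝ) ^ n * b ^ (a + n) *
          (R ^ (α * a + α * n + 2) - r₀ ^ (α * a + α * n + 2)) /
          (n.factorial * (a + n) * (α * a + α * n + 2))| := by
      funext n
      rw [hnorm n, habs n]
      have hf : ((n.factorial : ℝ)) ≠ 0 := by positivity
      have hap := (hapos n).ne'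
      have hcp := (hcpos n).ne'
      field_simp
    rw [this]
    exact hsummable
  have key : ∀ r ∈ Set.Ioc r₀ R, lowerGamma a (b * r ^ α) * r = ∑' n : ℕ, g n r := by
    intro r hr
    have hr0 : 0 < r := lt_of_le_of_lt hr₀ hr.1
    have hx : (0:ℝ) ≤ b * r ^ α := by positivity
    rw [gamma_series a _ ha hx, ← tsum_mul_right]
    refine tsum_congr fun n => ?_
    rw [hg]
    have h1 : (b * r ^ α) ^ (a + (n:ℝ)) = b ^ (a + (n:ℝ)) * r ^ (α * (a + n)) := by
      rw [Real.mul_rpow hb.le (Real.rpow_nonneg hr0.le α), ← Real.rpow_mul hr0.le]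
    have h2 : r ^ (α * (a + (n:ℝ))) * r = r ^ (α * a + α * n + 1) := by
      rw [← Real.rpow_add_one hr0.ne' (α * (a + (n:ℝ)))]
      rw [show α * (a + (n:ℝ)) + 1 = α * a + α * n + 1 by ring]
    calc (-1:ℝ) ^ n * (b * r ^ α) ^ (a + (n:ℝ)) / (n.factorial * (a + n)) * r
        = ((-1:ℝ) ^ n * b ^ (a + (n:ℝ)) / (n.factorial * (a + n))) *
            (r ^ (α * (a + (n:ℝ))) * r) := by rw [h1]; ring
      _ = ((-1:ℝ) ^ n * b ^ (a + (n:ℝ)) / (n.factorial * (a + n))) *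
            r ^ (α * a + α * n + 1) := by rw [h2]
  have step : (∫ r in r₀..R, lowerGamma a (b * r ^ α) * r) =
      ∫ r in Set.Ioc r₀ R, ∑' n : ℕ, g n r := by
    rw [intervalIntegral.integral_of_le hR.le]
    exact setIntegral_congr_fun measurableSet_Ioc key
  rw [step, ← MeasureTheory.integral_tsum_of_summable_integral_norm hInt hsum]
  refine tsum_congr fun n => ?_
  rw [hg]
  simp only
  rw [MeasureTheory.integral_const_mul, hIval n]
  have hf : ((n.factorial : ℝ)) ≠ 0 := by positivity
  have hap := (hapos n).ne'
  have hcp := (hcpos n).ne'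
  field_simp
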